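/- The Dirichlet series of Klee's totient φ_b equals ζ(s−1)/ζ(bs) for Re(s) > 2: Σ_{n≥1} φ_b(n)/n^s = ζ(s−1)/ζ(bs). -/

import Mathlib

noncomputable def ggcd (b r s : ℕ) : ℕ := sSup {d : ℕ | 0 < d ∧ d ^ b ∣ r ∧ d ^ b ∣ s}

noncomputable def klee (b n : ℕ) : ℕ :=
  ((Finset.Icc 1 n).filter (fun k => ggcd b k n = 1)).card

open ArithmeticFunction Finset LSeries
open scoped LSeries.notation
open scoped ArithmeticFunction.Moebius ArithmeticFunction.zeta

/-- The `b`-th "power core": largest `c` such that every `d` with `d^b ∣ m` divides `c`. -/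
noncomputable def kcore (b m : ℕ) : ℕ := ∏ p ∈ m.primeFactors, p ^ (m.factorization p / b)

lemma kcore_pos (b m : ℕ) : 0 < kcore b m := by
  refine Finset.prod_pos fun p hp => ?_
  exact pow_pos (Nat.prime_of_mem_primeFactors hp).pos _

lemma kcore_factorization (b : ℕ) {m : ℕ} (hm : m ≠ 0) (q : ℕ) :
    (kcore b m).factorization q = m.factorization q / b := by
  rw [kcore, Nat.factorization_prod (fun p hp => pow_ne_zero _ (Nat.prime_of_mem_primeFactors hp).ne_zero)]
  rw [Finset.sum_apply']
  have : ∀ p ∈ m.primeFactors, (p ^ (m.factorization p / b)).factorization q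
      = if p = q then m.factorization p / b else 0 := by
    intro p hp
    rw [(Nat.prime_of_mem_primeFactors hp).factorization_pow, Finsupp.single_apply]
  rw [Finset.sum_congr rfl this, Finset.sum_ite_eq']
  by_cases hq : q ∈ m.primeFactors
  · simp [hq]
  · rw [if_neg hq]
    have : m.factorization q = 0 := by
      have := Nat.support_factorization (n := m) ▸ hq
      exact Finsupp.notMem_support_iff.mp this
    simp [this]

lemma pow_dvd_iff_dvd_kcore {b : ℕ} (hb : 1 ≤ b) {m : ℕ} (hm : m ≠ 0) (d : ℕ) :
    d ^ b ∣ m ↔ d ∣ kcore b m := by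
  have hb0 : 0 < b := hb
  rcases eq_or_ne d 0 with rfl | hd
  · rw [zero_pow (by omega)]
    simp [hm, (kcore_pos b m).ne']
  · rw [← Nat.factorization_le_iff_dvd (pow_ne_zero _ hd) hm,
      ← Nat.factorization_le_iff_dvd hd (kcore_pos b m).ne', Nat.factorization_pow]
    constructor
    · intro h
      intro q
      have hq := h q
      simp only [Finsupp.smul_apply, smul_eq_mul] at hq
      rw [kcore_factorization b hm q, Nat.le_div_iff_mul_le hb0, mul_comm]
      exact hq
    · intro h q
      have hq := h q
      rw [kcore_factorization b hm q, Nat.le_div_iff_mul_le hb0] at hq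
      simp only [Finsupp.smul_apply, smul_eq_mul, mul_comm b]
      exact hq

lemma ggcd_eq {b : ℕ} (hb : 1 ≤ b) {k n : ℕ} (hk : k ≠ 0) (hn : n ≠ 0) :
    ggcd b k n = kcore b (Nat.gcd k n) := by
  have hg : Nat.gcd k n ≠ 0 := Nat.gcd_ne_zero_left hk
  set c := kcore b (Nat.gcd k n) with hc
  have hcd : ∀ d, d ^ b ∣ k ∧ d ^ b ∣ n ↔ d ∣ c := by
    intro d
    rw [hc, ← pow_dvd_iff_dvd_kcore hb hg, Nat.dvd_gcd_iff]
  refine IsGreatest.csSup_eq ⟨⟨kcore_pos b _, (hcd c).mpr dvd_rfl⟩, ?_⟩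
  rintro d ⟨hd0, hdk, hdn⟩
  exact Nat.le_of_dvd (kcore_pos b _) ((hcd d).mp ⟨hdk, hdn⟩)

lemma dvd_ggcd_iff {b : ℕ} (hb : 1 ≤ b) {k n : ℕ} (hk : k ≠ 0) (hn : n ≠ 0) (d : ℕ) :
    d ∣ ggcd b k n ↔ d ^ b ∣ k ∧ d ^ b ∣ n := by
  rw [ggcd_eq hb hk hn, ← pow_dvd_iff_dvd_kcore hb (Nat.gcd_ne_zero_left hk), Nat.dvd_gcd_iff]

lemma ggcd_ne_zero {b : ℕ} (hb : 1 ≤ b) {k n : ℕ} (hk : k ≠ 0) (hn : n ≠ 0) :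
    ggcd b k n ≠ 0 := by
  rw [ggcd_eq hb hk hn]; exact (kcore_pos b _).ne'

lemma sum_moebius_divisors (n : ℕ) :
    ∑ d ∈ n.divisors, μ d = if n = 1 then 1 else 0 := by
  have h : (μ * ↑ζ : ArithmeticFunction ℤ) n = (1 : ArithmeticFunction ℤ) n := by
    rw [ArithmeticFunction.moebius_mul_coe_zeta]
  rwa [ArithmeticFunction.coe_mul_zeta_apply, ArithmeticFunction.one_apply] at h

/-- Klee's totient as a Möbius sum. -/
lemma klee_eq_sum {b : ℕ} (hb : 1 ≤ b) {n : ℕ} (hn : n ≠ 0) :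
    (klee b n : ℤ) =
      ∑ d ∈ n.divisors.filter (fun d => d ^ b ∣ n), μ d * ((n / d ^ b : ℕ) : ℤ) := by
  have h1 : (klee b n : ℤ) = ∑ k ∈ Finset.Icc 1 n, if ggcd b k n = 1 then (1 : ℤ) else 0 := by
    rw [klee, Finset.card_filter]
    push_cast
    rfl
  rw [h1]
  have h2 : ∀ k ∈ Finset.Icc 1 n, (if ggcd b k n = 1 then (1 : ℤ) else 0)
      = ∑ d ∈ n.divisors, if d ^ b ∣ k ∧ d ^ b ∣ n then μ d else 0 := by
    intro k hk
    have hk0 : k ≠ 0 := by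
      have := (Finset.mem_Icc.mp hk).1; omega
    rw [← Finset.sum_filter]
    have hset : n.divisors.filter (fun d => d ^ b ∣ k ∧ d ^ b ∣ n)
        = (ggcd b k n).divisors := by
      ext d
      rw [Finset.mem_filter, Nat.mem_divisors, Nat.mem_divisors, dvd_ggcd_iff hb hk0 hn]
      constructor
      · rintro ⟨_, h⟩; exact ⟨h, ggcd_ne_zero hb hk0 hn⟩
      · rintro ⟨⟨h1', h2'⟩, _⟩
        exact ⟨⟨dvd_trans (dvd_pow_self d (by omega)) h2', hn⟩, h1', h2'⟩
    rw [hset, sum_moebius_divisors]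
  rw [Finset.sum_congr rfl h2, Finset.sum_comm]
  rw [Finset.sum_filter]
  refine Finset.sum_congr rfl fun d hd => ?_
  by_cases hdb : d ^ b ∣ n
  · rw [if_pos hdb]
    have : ∀ k ∈ Finset.Icc 1 n, (if d ^ b ∣ k ∧ d ^ b ∣ n then (μ d : ℤ) else 0)
        = if d ^ b ∣ k then (μ d : ℤ) else 0 := by
      intro k _; simp [hdb]
    rw [Finset.sum_congr rfl this, ← Finset.sum_filter, Finset.sum_const]
    have hicc : Finset.Icc 1 n = Finset.Ioc 0 n := rfl
    rw [hicc]
    have := Nat.Ioc_filter_dvd_card_eq_div n (d ^ b)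
    have hcard : ((Finset.Ioc 0 n).filter (fun k => d ^ b ∣ k)).card = n / d ^ b := by
      simpa using this
    rw [hcard, nsmul_eq_mul, mul_comm]
  · rw [if_neg hdb]
    refine Finset.sum_eq_zero fun k _ => ?_
    simp [hdb]

open Classical in
noncomputable def kg (b : ℕ) : ℕ → ℂ := fun a =>
  if h : ∃ e : ℕ, e ^ b = a then ((μ h.choose : ℤ) : ℂ) else 0

lemma kg_pow {b : ℕ} (hb : 1 ≤ b) (e : ℕ) : kg b (e ^ b) = ((μ e : ℤ) : ℂ) := by
  have h : ∃ e' : ℕ, e' ^ b = e ^ b := ⟨e, rfl⟩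
  simp only [kg]
  rw [dif_pos h]
  have : h.choose = e := Nat.pow_left_injective (show b ≠ 0 by omega) h.choose_spec
  rw [this]

lemma kg_eq_zero {b a : ℕ} (h : ∀ e : ℕ, e ^ b ≠ a) : kg b a = 0 := by
  simp only [kg]
  rw [dif_neg]
  rintro ⟨e, he⟩; exact h e he

lemma norm_kg_le (b a : ℕ) : ‖kg b a‖ ≤ 1 := by
  simp only [kg]
  split
  · rw [Complex.norm_intCast]
    exact_mod_cast abs_moebius_le_one
  · simp

lemma klee_eq_conv {b : ℕ} (hb : 1 ≤ b) {n : ℕ} (hn : n ≠ 0) :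
    (klee b n : ℂ) = (kg b ⍟ fun m : ℕ => (m : ℂ)) n := by
  rw [convolution_def]
  show (klee b n : ℂ) = ∑ p ∈ n.divisorsAntidiagonal, kg b p.1 * (p.2 : ℂ)
  set E := n.divisors.filter (fun d => d ^ b ∣ n) with hE
  set i : ℕ → ℕ × ℕ := fun d => (d ^ b, n / d ^ b) with hi
  set T := E.image i with hT
  have hTsub : T ⊆ n.divisorsAntidiagonal := by
    intro p hp
    rw [hT, Finset.mem_image] at hp
    obtain ⟨d, hd, rfl⟩ := hp
    rw [hE, Finset.mem_filter] at hd
    rw [Nat.mem_divisorsAntidiagonal]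
    exact ⟨Nat.mul_div_cancel' hd.2, hn⟩
  have hzero : ∀ p ∈ n.divisorsAntidiagonal, p ∉ T → kg b p.1 * (p.2 : ℂ) = 0 := by
    intro p hp hpT
    by_contra hne
    have hkg : kg b p.1 ≠ 0 := fun h => hne (by rw [h, zero_mul])
    have hex : ∃ e : ℕ, e ^ b = p.1 := by
      by_contra hex
      push_neg at hex
      exact hkg (kg_eq_zero hex)
    obtain ⟨e, he⟩ := hex
    rw [Nat.mem_divisorsAntidiagonal] at hp
    have hp1 : p.1 ≠ 0 := by
      intro h; rw [h, zero_mul] at hp; exact hn hp.1.symm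
    have hn2 : n = e ^ b * p.2 := by rw [he, hp.1]
    have heb : e ^ b ∣ n := ⟨p.2, hn2⟩
    have hpos : 0 < e ^ b := Nat.pos_of_ne_zero (by rw [he]; exact hp1)
    have hp2 : p.2 = n / e ^ b := (Nat.div_eq_of_eq_mul_left hpos (by rw [hn2]; ring)).symm
    apply hpT
    rw [hT, Finset.mem_image]
    refine ⟨e, ?_, ?_⟩
    · rw [hE, Finset.mem_filter, Nat.mem_divisors]
      exact ⟨⟨dvd_trans (dvd_pow_self e (by omega)) heb, hn⟩, heb⟩
    · rw [hi]
      ext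
      · exact he
      · exact hp2.symm
  rw [← Finset.sum_subset hTsub hzero, hT]
  rw [Finset.sum_image (fun x hx y hy hxy => Nat.pow_left_injective (show b ≠ 0 by omega) (congrArg Prod.fst hxy))]
  have : ∀ d ∈ E, kg b (i d).1 * ((i d).2 : ℂ) = ((μ d : ℤ) : ℂ) * ((n / d ^ b : ℕ) : ℂ) := by
    intro d _
    rw [hi, kg_pow hb]
  rw [Finset.sum_congr rfl this]
  have := klee_eq_sum hb hn
  calc (klee b n : ℂ) = ((klee b n : ℤ) : ℂ) := by push_cast; ring
    _ = _ := by
        rw [this, Int.cast_sum]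
        refine Finset.sum_congr rfl fun d hd => ?_
        rw [Int.cast_mul, Int.cast_natCast]

theorem klee_dirichlet_series (b : ℕ) (hb : 1 ≤ b) (s : ℂ) (hs : 2 < s.re) :
    ∑' n : ℕ+, (klee b n : ℂ) / (n : ℂ) ^ s =
      riemannZeta (s - 1) / riemannZeta ((b : ℂ) * s) := by
  have hs1 : 1 < s.re := by linarith
  have hs1' : 1 < (s - 1).re := by
    simp only [Complex.sub_re, Complex.one_re]; linarith
  have hbs : 1 < ((b : ℂ) * s).re := by
    have h1 : ((b : ℂ) * s).re = (b : ℝ) * s.re := by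
      simp [Complex.mul_re]
    rw [h1]
    have hb1 : (1 : ℝ) ≤ b := by exact_mod_cast hb
    nlinarith
  -- term identity for the identity function
  have hterm : ∀ n : ℕ, term (fun m : ℕ => (m : ℂ)) s n = term 1 (s - 1) n := by
    intro n
    rcases eq_or_ne n 0 with rfl | hn
    · simp [term_zero]
    · rw [term_of_ne_zero hn, term_of_ne_zero hn, Pi.one_apply]
      have hne : (n : ℂ) ≠ 0 := Nat.cast_ne_zero.mpr hn
      have hpow : (n : ℂ) ^ s = (n : ℂ) ^ (s - 1) * (n : ℂ) := by
        conv_lhs => rw [show s = (s - 1) + 1 by ring]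
        rw [Complex.cpow_add _ _ hne, Complex.cpow_one]
      rw [hpow, mul_comm, div_mul_eq_div_div, div_self hne]
  have hidsum : LSeriesSummable (fun m : ℕ => (m : ℂ)) s := by
    unfold LSeriesSummable
    rw [summable_congr hterm]
    exact LSeriesSummable_one_iff.mpr hs1'
  have hLid : LSeries (fun m : ℕ => (m : ℂ)) s = riemannZeta (s - 1) := by
    rw [LSeries, tsum_congr hterm, ← LSeries, LSeries_one_eq_riemannZeta hs1']
  have hGsum : LSeriesSummable (kg b) s := by
    have h1 : Summable fun n => ‖term (kg b) s n‖ :=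
      ((LSeriesSummable_one_iff.mpr hs1).norm).of_nonneg_of_le
        (fun _ => norm_nonneg _) (fun n => norm_term_le s (by simpa using norm_kg_le b n))
    exact h1.of_norm
  have hLG : LSeries (kg b) s = 1 / riemannZeta ((b : ℂ) * s) := by
    have hinj : Function.Injective (fun e : ℕ => e ^ b) := Nat.pow_left_injective (show b ≠ 0 by omega)
    have hLGmu : LSeries (kg b) s = LSeries (fun n : ℕ => ((μ n : ℤ) : ℂ)) ((b : ℂ) * s) := by
      rw [LSeries, LSeries]
      rw [← Function.Injective.tsum_eq hinj (f := term (kg b) s) ?_]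
      · refine tsum_congr fun e => ?_
        rcases eq_or_ne e 0 with rfl | he
        · simp only [zero_pow (show b ≠ 0 by omega)]
          simp [term_zero]
        · have heb : e ^ b ≠ 0 := pow_ne_zero _ he
          rw [term_of_ne_zero heb, term_of_ne_zero he, kg_pow hb]
          congr 1
          push_cast
          rw [Complex.natCast_cpow_natCast_mul]
      · intro a ha
        rw [Function.mem_support] at ha
        by_contra har
        have : ∀ e : ℕ, e ^ b ≠ a := by
          intro e he
          exact har ⟨e, he⟩
        rcases eq_or_ne a 0 with rfl | ha0
        · exact ha (term_zero _ _)
        · rw [term_of_ne_zero ha0, kg_eq_zero this, zero_div] at ha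
          exact ha rfl
    rw [hLGmu]
    have h2 := LSeries_zeta_mul_Lseries_moebius hbs
    rw [LSeries_zeta_eq_riemannZeta hbs] at h2
    have h3 : riemannZeta ((b : ℂ) * s) ≠ 0 := riemannZeta_ne_zero_of_one_lt_re hbs
    rw [eq_div_iff h3, mul_comm]
    exact h2
  have hconv := LSeries_convolution' hGsum hidsum
  have hmain : ∑' n : ℕ+, (klee b n : ℂ) / (n : ℂ) ^ s
      = LSeries (fun m : ℕ => (klee b m : ℂ)) s := by
    rw [LSeries]
    rw [← Function.Injective.tsum_eq (g := fun n : ℕ+ => (n : ℕ))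
      (f := term (fun m : ℕ => (klee b m : ℂ)) s) PNat.coe_injective ?_]
    · exact tsum_congr fun n => by
        rw [term_of_ne_zero n.ne_zero]
    · intro a ha
      rw [Function.mem_support] at ha
      have ha0 : a ≠ 0 := fun h => ha (h ▸ term_zero _ _)
      exact ⟨⟨a, Nat.pos_of_ne_zero ha0⟩, rfl⟩
  rw [hmain]
  have hklee : LSeries (fun m : ℕ => (klee b m : ℂ)) s
      = LSeries (kg b ⍟ fun m : ℕ => (m : ℂ)) s :=
    LSeries_congr (fun hn => klee_eq_conv hb hn) s
  rw [hklee, hconv, hLG, hLid]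
  rw [one_div, mul_comm, div_eq_mul_inv]
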